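/- Let p ≥ 2 be an integer, A_∞ ∈ GL_{n₁}(ℂ) and B_∞ ∈ GL_{n₂}(ℂ). Let T be an n₂×n₁ matrix with entries in the field ℂ((1/z)) of formal Laurent series in 1/z, written T = Σ_{k ≥ N} T_k z^{-k} with matrix coefficients T_k ∈ M_{n₂,n₁}(ℂ) (only finitely many positive powers of z occur). If T(z^p)·A_∞ = B_∞·T(z), where T(z^p) is obtained by substituting z^p for z in every entry, then T is a constant matrix in M_{n₂,n₁}(ℂ). -/

import Mathlib

/-- Let `p ≥ 2`, `A_∞ ∈ GL_{n₁}(ℂ)`, `B_∞ ∈ GL_{n₂}(ℂ)`, and let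
`T = Σ_{k ≥ N} T_k z^{-k}` be an `n₂×n₁` matrix of formal Laurent series in `1/z`
(encoded by the coefficient family `T : ℤ → M_{n₂,n₁}(ℂ)` of the powers `z^{-k}`,
vanishing for `k < N`, so only finitely many positive powers of `z` occur). The
substitution `z ↦ z^p` sends `z^{-k}` to `z^{-pk}`. If `T(z^p)·A_∞ = B_∞·T(z)`, i.e.
for every `k : ℤ` one has `B_∞·T_k = T_{k/p}·A_∞` if `p ∣ k` and `B_∞·T_k = 0`
otherwise, then `T` is a constant matrix: `T_k = 0` for every `k ≠ 0`. -/
theorem morphism_between_constant_systems_at_infinity_is_constant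
    (p : ℕ) (hp : 2 ≤ p) (n₁ n₂ : ℕ)
    (Ainf : Matrix (Fin n₁) (Fin n₁) ℂ) (hAinf : IsUnit Ainf.det)
    (Binf : Matrix (Fin n₂) (Fin n₂) ℂ) (hBinf : IsUnit Binf.det)
    (T : ℤ → Matrix (Fin n₂) (Fin n₁) ℂ)
    (hLaurent : ∃ N : ℤ, ∀ k < N, T k = 0)
    (heq : ∀ k : ℤ,
      Binf * T k = if (p : ℤ) ∣ k then T (k / (p : ℤ)) * Ainf else 0) :
    ∀ k : ℤ, k ≠ 0 → T k = 0 := by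
  obtain ⟨N, hN⟩ := hLaurent
  have hBinv := Matrix.nonsing_inv_mul Binf hBinf
  have hAinv := Matrix.mul_nonsing_inv Ainf hAinf
  have hB0 : ∀ M : Matrix (Fin n₂) (Fin n₁) ℂ, Binf * M = 0 → M = 0 := by
    intro M h
    calc M = Binf⁻¹ * (Binf * M) := by rw [← Matrix.mul_assoc, hBinv, Matrix.one_mul]
    _ = 0 := by rw [h, Matrix.mul_zero]
  have hA0 : ∀ M : Matrix (Fin n₂) (Fin n₁) ℂ, M * Ainf = 0 → M = 0 := by
    intro M h
    calc M = (M * Ainf) * Ainf⁻¹ := by rw [Matrix.mul_assoc, hAinv, Matrix.mul_one]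
    _ = 0 := by rw [h, Matrix.zero_mul]
  have hp2 : (2 : ℤ) ≤ (p : ℤ) := by exact_mod_cast hp
  have hpz : (0 : ℤ) < (p : ℤ) := by linarith
  -- positive exponents: descent
  have hpos : ∀ m : ℕ, ∀ k : ℤ, 0 < k → k.toNat ≤ m → T k = 0 := by
    intro m
    induction m with
    | zero =>
      intro k hk hle
      omega
    | succ m ih =>
      intro k hk hle
      by_cases hd : (p : ℤ) ∣ k
      · obtain ⟨q, rfl⟩ := hd
        have hq : 0 < q := by nlinarith
        have hlt : q < (p : ℤ) * q := by nlinarith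
        have hdq : ((p : ℤ) * q) / (p : ℤ) = q :=
          Int.mul_ediv_cancel_left q (by omega)
        have hT : T q = 0 := ih _ hq (by omega)
        have := heq ((p : ℤ) * q)
        rw [if_pos (Dvd.intro q rfl), hdq, hT, Matrix.zero_mul] at this
        exact hB0 _ this
      · have := heq k
        rw [if_neg hd] at this
        exact hB0 _ this
  -- negative exponents: ascent to below N
  have hneg : ∀ n : ℕ, ∀ k : ℤ, k < 0 → (p : ℤ) ^ n * k < N → T k = 0 := by
    intro n
    induction n with
    | zero =>
      intro k hk hlt
      apply hN
      simpa using hlt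
    | succ n ih =>
      intro k hk hlt
      have h1 : T ((p : ℤ) * k) = 0 := by
        apply ih _ (mul_neg_of_pos_of_neg hpz hk)
        calc (p : ℤ) ^ n * ((p : ℤ) * k) = (p : ℤ) ^ (n + 1) * k := by ring
        _ < N := hlt
      have hd : (p : ℤ) ∣ (p : ℤ) * k := Dvd.intro k rfl
      have := heq ((p : ℤ) * k)
      rw [if_pos hd, Int.mul_ediv_cancel_left k (by omega), h1, Matrix.mul_zero] at this
      exact hA0 _ this.symm
  intro k hk
  rcases lt_trichotomy k 0 with h | h | h
  · obtain ⟨n, hn⟩ := pow_unbounded_of_one_lt (R := ℤ) (-N) (by linarith : (1 : ℤ) < p)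
    have hpn : (0 : ℤ) < (p : ℤ) ^ n := pow_pos hpz n
    exact hneg n k h (by nlinarith)
  · exact absurd h hk
  · exact hpos k.toNat k h le_rfl
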